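/- Let (G, c, M) be an instance of Graph Motif in which M has at least two elements (counted with multiplicity), and let C_1, …, C_k ⊆ V(G) be an edge clique cover of G: each G[C_i] is a clique and every edge of G has both endpoints inside some C_i. For a nonempty T ⊆ {1,…,k}, let W_T = ⋃_{i ∈ T} C_i, let B_T be the bipartite graph on vertex set T ⊎ W_T with an edge between i ∈ T and w ∈ W_T if and only if w ∈ C_i, let c'_T agree with c on W_T and assign to every vertex of T a fresh color γ that does not occur in M and is not a value of c, and let M'_T = M together with |T| copies of γ. Then (G, c, M) has a motif solution if and only if there exists a nonempty T ⊆ {1,…,k} such that (B_T, c'_T, M'_T) has a motif solution. -/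

import Mathlib

/-- A motif solution of an instance `(G, c, M)`: a set `R` of vertices such that the
induced subgraph `G[R]` is connected and the multiset of colors of `R` equals `M`. -/
def IsMotifSolution {V C : Type*} (G : SimpleGraph V) (c : V → C) (M : Multiset C)
    (R : Finset V) : Prop :=
  (G.induce (R : Set V)).Connected ∧ Multiset.map c R.val = M

/-- Let `M` have at least two elements and `C_1, …, C_k` be an edge
clique cover of `G`. For nonempty `T`, `B_T` is the bipartite graph on `T ⊎ W_T`
(`W_T = ⋃_{i ∈ T} C_i`) with `i` adjacent to `w` iff `w ∈ C_i`; vertices of `T` get a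
fresh color `γ` and `M'_T = M + |T|·γ`. Then `(G, c, M)` has a motif solution iff there
is a nonempty `T` such that `(B_T, c'_T, M'_T)` has one. -/
theorem stmt_12 {V D : Type*} [Fintype V] (G : SimpleGraph V)
    (c : V → D) (M : Multiset D) (hM : 2 ≤ Multiset.card M)
    (k : ℕ) (C : Fin k → Set V)
    (hclique : ∀ i, G.IsClique (C i))
    (hcover : ∀ u v, G.Adj u v → ∃ i, u ∈ C i ∧ v ∈ C i)
    (γ : D) (hγM : γ ∉ M) (hγc : ∀ v, c v ≠ γ) :
    (∃ R : Finset V, IsMotifSolution G c M R) ↔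
    ∃ T : Finset (Fin k), T.Nonempty ∧
      ∃ R' : Finset ({i // i ∈ T} ⊕ {w // w ∈ ⋃ i ∈ T, C i}),
        IsMotifSolution
          (SimpleGraph.fromRel (fun a b =>
            ∃ (i : {i // i ∈ T}) (w : {w // w ∈ ⋃ i ∈ T, C i}),
              a = Sum.inl i ∧ b = Sum.inr w ∧ (w : V) ∈ C i.val))
          (Sum.elim (fun _ => γ) (fun w => c w))
          (M + Multiset.replicate T.card γ) R' := by
  classical
  constructor
  · rintro ⟨R, hconn, hcol⟩
    have hcard : Multiset.card R.val = Multiset.card M := by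
      rw [← hcol, Multiset.card_map]
    have hR2 : 1 < R.card := by
      have : R.card = Multiset.card R.val := rfl
      omega
    have hnbr : ∀ u, u ∈ R → ∃ v, v ∈ R ∧ G.Adj u v := by
      intro u hu
      obtain ⟨v, hv, hvu⟩ := Finset.exists_mem_ne hR2 u
      obtain ⟨p⟩ := hconn.preconnected ⟨u, Finset.mem_coe.mpr hu⟩ ⟨v, Finset.mem_coe.mpr hv⟩
      cases p with
      | nil => exact absurd rfl hvu
      | @cons _ y _ h q =>
        exact ⟨y.1, Finset.mem_coe.mp y.2, SimpleGraph.comap_adj.mp h⟩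
    set T : Finset (Fin k) := Finset.univ.filter
      (fun i => ∃ u v, u ∈ R ∧ v ∈ R ∧ G.Adj u v ∧ u ∈ C i ∧ v ∈ C i) with hT
    have hmemT : ∀ i, i ∈ T ↔ ∃ u v, u ∈ R ∧ v ∈ R ∧ G.Adj u v ∧ u ∈ C i ∧ v ∈ C i := by
      intro i; simp [hT]
    have hmemW : ∀ u, u ∈ R → u ∈ ⋃ i ∈ T, C i := by
      intro u hu
      obtain ⟨v, hv, hadj⟩ := hnbr u hu
      obtain ⟨i, hui, hvi⟩ := hcover u v hadj
      exact Set.mem_biUnion ((hmemT i).mpr ⟨u, v, hu, hv, hadj, hui, hvi⟩) hui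
    have hRne : R.Nonempty := Finset.card_pos.mp (by omega)
    have hTne : T.Nonempty := by
      obtain ⟨u, hu⟩ := hRne
      obtain ⟨v, hv, hadj⟩ := hnbr u hu
      obtain ⟨i, hui, hvi⟩ := hcover u v hadj
      exact ⟨i, (hmemT i).mpr ⟨u, v, hu, hv, hadj, hui, hvi⟩⟩
    refine ⟨T, hTne, ?_⟩
    set B : SimpleGraph ({i // i ∈ T} ⊕ {w // w ∈ ⋃ i ∈ T, C i}) :=
      SimpleGraph.fromRel (fun a b =>
        ∃ (i : {i // i ∈ T}) (w : {w // w ∈ ⋃ i ∈ T, C i}),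
          a = Sum.inl i ∧ b = Sum.inr w ∧ (w : V) ∈ C i.val) with hBdef
    have hfinj : Function.Injective
        (fun x : {x // x ∈ R} =>
          (Sum.inr ⟨x.1, hmemW x.1 x.2⟩ : {i // i ∈ T} ⊕ {w // w ∈ ⋃ i ∈ T, C i})) := by
      intro a b hab
      simp only [Sum.inr.injEq, Subtype.mk.injEq] at hab
      exact Subtype.ext hab
    have hdisj : Disjoint (T.attach.map ⟨Sum.inl, Sum.inl_injective⟩)
        (R.attach.map ⟨_, hfinj⟩) := by
      simp only [Finset.disjoint_left, Finset.mem_map, Finset.mem_attach,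
        Function.Embedding.coeFn_mk, true_and]
      rintro x ⟨i, rfl⟩ ⟨w, hw⟩
      exact absurd hw (by simp)
    set R' : Finset ({i // i ∈ T} ⊕ {w // w ∈ ⋃ i ∈ T, C i}) :=
      (T.attach.map ⟨Sum.inl, Sum.inl_injective⟩).disjUnion (R.attach.map ⟨_, hfinj⟩) hdisj
      with hR'def
    have memInl : ∀ i : {i // i ∈ T}, Sum.inl i ∈ R' := by
      intro i
      rw [hR'def, Finset.mem_disjUnion]
      exact Or.inl (Finset.mem_map.mpr ⟨i, Finset.mem_attach _ _, rfl⟩)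
    have memInr : ∀ u (hu : u ∈ R), (Sum.inr ⟨u, hmemW u hu⟩ :
        {i // i ∈ T} ⊕ {w // w ∈ ⋃ i ∈ T, C i}) ∈ R' := by
      intro u hu
      rw [hR'def, Finset.mem_disjUnion]
      exact Or.inr (Finset.mem_map.mpr ⟨⟨u, hu⟩, Finset.mem_attach _ _, rfl⟩)
    have hcol' : Multiset.map (Sum.elim (fun _ => γ) (fun w : {w // w ∈ ⋃ i ∈ T, C i} => c ↑w)) R'.val
        = M + Multiset.replicate T.card γ := by
      rw [hR'def]
      have hval : ((T.attach.map ⟨Sum.inl, Sum.inl_injective⟩).disjUnion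
          (R.attach.map ⟨_, hfinj⟩) hdisj).val
          = T.attach.val.map Sum.inl + R.attach.val.map
            (fun x : {x // x ∈ R} => (Sum.inr ⟨x.1, hmemW x.1 x.2⟩ :
              {i // i ∈ T} ⊕ {w // w ∈ ⋃ i ∈ T, C i})) := rfl
      rw [hval, Multiset.map_add, Multiset.map_map, Multiset.map_map]
      have h1 : Multiset.map ((Sum.elim (fun _ => γ) (fun w : {w // w ∈ ⋃ i ∈ T, C i} => c ↑w))
          ∘ Sum.inl) T.attach.val = Multiset.replicate T.card γ := by
        rw [show ((Sum.elim (fun _ => γ) (fun w : {w // w ∈ ⋃ i ∈ T, C i} => c ↑w)) ∘ Sum.inl)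
          = fun _ => γ from rfl, Multiset.map_const']
        congr 1
        rw [← Finset.card_def, Finset.card_attach]
      have h2 : Multiset.map ((Sum.elim (fun _ => γ) (fun w : {w // w ∈ ⋃ i ∈ T, C i} => c ↑w))
          ∘ fun x : {x // x ∈ R} => (Sum.inr ⟨x.1, hmemW x.1 x.2⟩ :
            {i // i ∈ T} ⊕ {w // w ∈ ⋃ i ∈ T, C i})) R.attach.val
          = Multiset.map c R.val := by
        rw [Finset.attach_val]
        conv_rhs => rw [← Multiset.attach_map_val R.val, Multiset.map_map]
        rfl
      rw [h1, h2, hcol, add_comm]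
    have hbridge : ∀ (i : {i // i ∈ T}) (u : V) (hu : u ∈ R) (hC : u ∈ C i.1),
        (B.induce (R' : Set _)).Adj ⟨Sum.inl i, memInl i⟩ ⟨Sum.inr ⟨u, hmemW u hu⟩, memInr u hu⟩ := by
      intro i u hu hC
      apply SimpleGraph.comap_adj.mpr
      rw [hBdef, SimpleGraph.fromRel_adj]
      exact ⟨by simp, Or.inl ⟨i, ⟨u, hmemW u hu⟩, rfl, rfl, hC⟩⟩
    have key : ∀ (a b : ↥(R : Set V)) (p : (G.induce (R : Set V)).Walk a b),
        (B.induce (R' : Set _)).Reachable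
          ⟨Sum.inr ⟨a.1, hmemW a.1 a.2⟩, memInr a.1 a.2⟩
          ⟨Sum.inr ⟨b.1, hmemW b.1 b.2⟩, memInr b.1 b.2⟩ := by
      intro a b p
      induction p with
      | nil => exact SimpleGraph.Reachable.refl _
      | cons h q ih =>
        rename_i x y z
        have hadj : G.Adj x.1 y.1 := SimpleGraph.comap_adj.mp h
        obtain ⟨i, hxi, hyi⟩ := hcover _ _ hadj
        have hiT : i ∈ T := (hmemT i).mpr ⟨x.1, y.1, x.2, y.2, hadj, hxi, hyi⟩
        exact (((hbridge ⟨i, hiT⟩ x.1 x.2 hxi).symm.reachable).trans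
          ((hbridge ⟨i, hiT⟩ y.1 y.2 hyi).reachable)).trans ih
    have reachInr : ∀ u (hu : u ∈ R) v (hv : v ∈ R),
        (B.induce (R' : Set _)).Reachable
          ⟨Sum.inr ⟨u, hmemW u hu⟩, memInr u hu⟩ ⟨Sum.inr ⟨v, hmemW v hv⟩, memInr v hv⟩ := by
      intro u hu v hv
      obtain ⟨p⟩ := hconn.preconnected ⟨u, hu⟩ ⟨v, hv⟩
      exact key ⟨u, hu⟩ ⟨v, hv⟩ p
    have reachInl : ∀ (i : {i // i ∈ T}), ∃ u, ∃ hu : u ∈ R,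
        (B.induce (R' : Set _)).Reachable ⟨Sum.inl i, memInl i⟩
          ⟨Sum.inr ⟨u, hmemW u hu⟩, memInr u hu⟩ := by
      intro i
      obtain ⟨u, v, hu, hv, hadj, hui, hvi⟩ := (hmemT i.1).mp i.2
      exact ⟨u, hu, (hbridge i u hu hui).reachable⟩
    refine ⟨R', ?_⟩
    unfold IsMotifSolution
    refine ⟨?_, hcol'⟩
    · rw [SimpleGraph.connected_iff]
      constructor
      · rintro ⟨x, hx⟩ ⟨y, hy⟩
        have hx' := Finset.mem_coe.mp hx
        have hy' := Finset.mem_coe.mp hy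
        rw [hR'def, Finset.mem_disjUnion] at hx' hy'
        have hxc : (∃ i : {i // i ∈ T}, x = Sum.inl i) ∨
            (∃ u, ∃ hu : u ∈ R, x = Sum.inr ⟨u, hmemW u hu⟩) := by
          rcases hx' with h | h
          · obtain ⟨i, -, rfl⟩ := Finset.mem_map.mp h
            exact Or.inl ⟨i, rfl⟩
          · obtain ⟨a, -, rfl⟩ := Finset.mem_map.mp h
            exact Or.inr ⟨a.1, a.2, rfl⟩
        have hyc : (∃ i : {i // i ∈ T}, y = Sum.inl i) ∨
            (∃ u, ∃ hu : u ∈ R, y = Sum.inr ⟨u, hmemW u hu⟩) := by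
          rcases hy' with h | h
          · obtain ⟨i, -, rfl⟩ := Finset.mem_map.mp h
            exact Or.inl ⟨i, rfl⟩
          · obtain ⟨a, -, rfl⟩ := Finset.mem_map.mp h
            exact Or.inr ⟨a.1, a.2, rfl⟩
        rcases hxc with ⟨i, rfl⟩ | ⟨u, hu, rfl⟩ <;> rcases hyc with ⟨j, rfl⟩ | ⟨v, hv, rfl⟩
        · obtain ⟨u, hu, h1⟩ := reachInl i
          obtain ⟨v, hv, h2⟩ := reachInl j
          exact (h1.trans (reachInr u hu v hv)).trans h2.symm
        · obtain ⟨u, hu, h1⟩ := reachInl i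
          exact h1.trans (reachInr u hu v hv)
        · obtain ⟨v, hv, h2⟩ := reachInl j
          exact (reachInr u hu v hv).trans h2.symm
        · exact reachInr u hu v hv
      · obtain ⟨i, hi⟩ := hTne
        exact ⟨⟨Sum.inl ⟨i, hi⟩, memInl ⟨i, hi⟩⟩⟩
  · rintro ⟨T, hTne, R', hconn, hcol⟩
    set B : SimpleGraph ({i // i ∈ T} ⊕ {w // w ∈ ⋃ i ∈ T, C i}) :=
      SimpleGraph.fromRel (fun a b =>
        ∃ (i : {i // i ∈ T}) (w : {w // w ∈ ⋃ i ∈ T, C i}),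
          a = Sum.inl i ∧ b = Sum.inr w ∧ (w : V) ∈ C i.val) with hBdef
    set h : ({i // i ∈ T} ⊕ {w // w ∈ ⋃ i ∈ T, C i}) → Option V :=
      fun x => match x with | Sum.inl _ => none | Sum.inr w => some w.1 with hhdef
    have hinj : ∀ a a', ∀ b ∈ h a, b ∈ h a' → a = a' := by
      rintro (i | w) (i' | w') b hb hb' <;> simp [hhdef] at hb hb'
      rw [← hb] at hb'
      simp [Subtype.ext hb']
    set R : Finset V := R'.filterMap h hinj with hRdef
    have hinrR : ∀ w, Sum.inr w ∈ R' → w.1 ∈ R := by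
      intro w hw
      exact (Finset.mem_filterMap _).mpr ⟨Sum.inr w, hw, rfl⟩
    have hmaps : ∀ s : Multiset ({i // i ∈ T} ⊕ {w // w ∈ ⋃ i ∈ T, C i}),
        Multiset.map c (Multiset.filterMap h s)
          = Multiset.filter (fun d => ¬ d = γ)
              (Multiset.map (Sum.elim (fun _ => γ) (fun w : {w // w ∈ ⋃ i ∈ T, C i} => c ↑w)) s) := by
      intro s
      induction s using Multiset.induction_on with
      | empty => simp
      | cons a s ih =>
        rcases a with i | w
        · rw [Multiset.filterMap_cons_none (Sum.inl i) s (show h (Sum.inl i) = none from rfl), Multiset.map_cons]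
          rw [Multiset.filter_cons_of_neg _ (by simp), ih]
        · rw [Multiset.filterMap_cons_some h (Sum.inr w) s (show h (Sum.inr w) = some w.1 from rfl), Multiset.map_cons,
            Multiset.map_cons, Multiset.filter_cons_of_pos _ (by simpa using hγc w.1), ih]
          rfl
    have hcolR : Multiset.map c R.val = M := by
      have : R.val = Multiset.filterMap h R'.val := rfl
      rw [this, hmaps, hcol, Multiset.filter_add]
      have h1 : Multiset.filter (fun d => ¬ d = γ) M = M :=
        Multiset.filter_eq_self.mpr (fun d hd => fun hdg => hγM (hdg ▸ hd))
      have h2 : Multiset.filter (fun d => ¬ d = γ) (Multiset.replicate T.card γ) = 0 :=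
        Multiset.filter_eq_nil.mpr (fun a ha => by simp [Multiset.eq_of_mem_replicate ha])
      rw [h1, h2, add_zero]
    have hRne : R.Nonempty := by
      rw [← Finset.card_pos, Finset.card_def, ← Multiset.card_map c R.val, hcolR]
      omega
    have hcliqueR : ∀ (i : Fin k) (u v : V) (hu : u ∈ R) (hv : v ∈ R),
        u ∈ C i → v ∈ C i → (G.induce (R : Set V)).Reachable ⟨u, hu⟩ ⟨v, hv⟩ := by
      intro i u v hu hv huC hvC
      by_cases huv : u = v
      · subst huv; rfl
      · exact (SimpleGraph.comap_adj.mpr (hclique i huC hvC huv)).reachable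
    have key2 : ∀ (a b : ↥(R' : Set ({i // i ∈ T} ⊕ {w // w ∈ ⋃ i ∈ T, C i})))
        (p : (B.induce (R' : Set ({i // i ∈ T} ⊕ {w // w ∈ ⋃ i ∈ T, C i}))).Walk a b),
        ∀ (u v : V) (hu : u ∈ R) (hv : v ∈ R),
        ((∃ w, a.1 = Sum.inr w ∧ u = w.1) ∨ (∃ i, a.1 = Sum.inl i ∧ u ∈ C i.1)) →
        ((∃ w, b.1 = Sum.inr w ∧ v = w.1) ∨ (∃ i, b.1 = Sum.inl i ∧ v ∈ C i.1)) →
        (G.induce (R : Set V)).Reachable ⟨u, hu⟩ ⟨v, hv⟩ := by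
      intro a b p
      induction p with
      | nil =>
        rename_i x
        intro u v hu hv hta htb
        rcases hta with ⟨w, hxw, rfl⟩ | ⟨i, hxi, huC⟩ <;>
          rcases htb with ⟨w', hxw', rfl⟩ | ⟨i', hxi', hvC⟩
        · rw [hxw] at hxw'
          obtain rfl : w = w' := by simpa using hxw'
          rfl
        · rw [hxw] at hxi'; simp at hxi'
        · rw [hxi] at hxw'; simp at hxw'
        · rw [hxi] at hxi'
          obtain rfl : i = i' := by simpa using hxi'
          exact hcliqueR i.1 _ _ hu hv huC hvC
      | cons hadj q ih =>
        rename_i x z w'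
        intro u v hu hv hta htb
        have hBz : B.Adj x.1 z.1 := SimpleGraph.comap_adj.mp hadj
        rw [hBdef, SimpleGraph.fromRel_adj] at hBz
        obtain ⟨hne, ⟨i, w, hxi, hzw, hwC⟩ | ⟨i, w, hzi, hxw, hwC⟩⟩ := hBz
        · -- x = inl i, z = inr w
          rcases hta with ⟨w', hxw', rfl⟩ | ⟨i', hxi', huC⟩
          · rw [hxi] at hxw'; simp at hxw'
          · rw [hxi] at hxi'
            obtain rfl : i = i' := by simpa using hxi'
            have hwR : w.1 ∈ R := hinrR w (by rw [← hzw]; exact Finset.mem_coe.mp z.2)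
            refine (hcliqueR i.1 u w.1 hu hwR huC hwC).trans ?_
            exact ih w.1 v hwR hv (Or.inl ⟨w, hzw, rfl⟩) htb
        · -- x = inr w, z = inl i
          rcases hta with ⟨w', hxw', rfl⟩ | ⟨i', hxi', huC⟩
          · rw [hxw] at hxw'
            obtain rfl : w = w' := by simpa using hxw'
            exact ih w.1 v hu hv (Or.inr ⟨i, hzi, hwC⟩) htb
          · rw [hxw] at hxi'; simp at hxi'
    have hmemR : ∀ u, u ∈ R → ∃ w, Sum.inr w ∈ R' ∧ w.1 = u := by
      intro u hu
      obtain ⟨a, ha, hau⟩ := (Finset.mem_filterMap _).mp hu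
      rcases a with i | w
      · simp [hhdef] at hau
      · exact ⟨w, ha, by simpa [hhdef] using hau⟩
    refine ⟨R, ?_⟩
    unfold IsMotifSolution
    refine ⟨(SimpleGraph.connected_iff _).mpr ⟨?_, ?_⟩, hcolR⟩
    · rintro ⟨u, hu⟩ ⟨v, hv⟩
      obtain ⟨w, hwR', hwu⟩ := hmemR u (Finset.mem_coe.mp hu)
      obtain ⟨w', hwR'', hwv⟩ := hmemR v (Finset.mem_coe.mp hv)
      obtain ⟨p⟩ := hconn.preconnected ⟨Sum.inr w, Finset.mem_coe.mpr hwR'⟩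
        ⟨Sum.inr w', Finset.mem_coe.mpr hwR''⟩
      exact key2 _ _ p u v hu hv (Or.inl ⟨w, rfl, hwu.symm⟩) (Or.inl ⟨w', rfl, hwv.symm⟩)
    · obtain ⟨u, hu⟩ := hRne
      exact ⟨⟨u, Finset.mem_coe.mpr hu⟩⟩
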